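/- Let f : ℝ × ℝ → ℂ be 2π-periodic and continuously differentiable in its second argument and continuous, and let D_N be the N×N diagonal matrix with diagonal entries z_N(n,n) (i.e. D_N = T_N(w) for w(z,θ) = z). Then for every positive integer N the exact identity [D_N, T_N(f)] = −iħ_N T_N(∂_θ f) holds, where ∂_θ f denotes the derivative of f in its second argument; equivalently, [T_N(w), T_N(f)] = iħ_N T_N({w,f}). -/

import Mathlib

noncomputable section

/-- The quantization parameter ħ_N = (b−a)β/N. -/
def hbar (a b β : ℝ) (N : ℕ) : ℝ := (b - a) * β / N

/-- z_N(n,m) = a + (ħ_N/2)(n+m), for 1-based indices n,m. -/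
def zN (a b β : ℝ) (N : ℕ) (n m : ℕ) : ℝ := a + hbar a b β N / 2 * (n + m)

/-- The k-th Fourier mode f_k(z) = (1/(2π)) ∫₀^{2π} f(z,θ) e^{−ikθ} dθ. -/
def fourierMode (f : ℝ × ℝ → ℂ) (k : ℤ) (z : ℝ) : ℂ :=
  (1 / (2 * Real.pi)) * ∫ θ in (0:ℝ)..(2 * Real.pi),
    f (z, θ) * Complex.exp (-(Complex.I * k * θ))

/-- The quantization map: (T_N(f))_{n,m} = f_{n−m}(z_N(n,m)), with 1-based indices. -/
def TN (a b β : ℝ) (N : ℕ) (f : ℝ × ℝ → ℂ) : Matrix (Fin N) (Fin N) ℂ :=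
  Matrix.of fun n m =>
    fourierMode f ((n.1 : ℤ) - (m.1 : ℤ)) (zN a b β N (n.1 + 1) (m.1 + 1))

/-- f is 2π-periodic in its second argument. -/
def Periodic2 (f : ℝ × ℝ → ℂ) : Prop := ∀ z θ : ℝ, f (z, θ + 2 * Real.pi) = f (z, θ)

/-- Partial derivative in the first argument (z). -/
def pz (f : ℝ × ℝ → ℂ) (p : ℝ × ℝ) : ℂ := deriv (fun t => f (t, p.2)) p.1

/-- Partial derivative in the second argument (θ). -/
def pθ (f : ℝ × ℝ → ℂ) (p : ℝ × ℝ) : ℂ := deriv (fun t => f (p.1, t)) p.2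

/-- The Poisson bracket {f,g} = ∂_θ f ∂_z g − ∂_z f ∂_θ g. -/
def pb (f g : ℝ × ℝ → ℂ) (p : ℝ × ℝ) : ℂ := pθ f p * pz g p - pz f p * pθ g p

end

lemma exp_neg_I_int_two_pi (k : ℤ) :
    Complex.exp (-(Complex.I * k * ((2 * Real.pi : ℝ) : ℂ))) = 1 := by
  have h := Complex.exp_int_mul_two_pi_mul_I (-k)
  rw [← h]; congr 1; push_cast; ring

/-- derivative of θ ↦ exp(-(I k θ)). -/
lemma hasDerivAt_expk (k : ℤ) (θ : ℝ) :
    HasDerivAt (fun t : ℝ => Complex.exp (-(Complex.I * k * t)))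
      (-(Complex.I * k) * Complex.exp (-(Complex.I * k * θ))) θ := by
  have h : HasDerivAt (fun w : ℂ => Complex.exp (-(Complex.I * k) * w))
      (Complex.exp (-(Complex.I * k) * θ) * (-(Complex.I * k))) (θ : ℂ) := by
    simpa using ((hasDerivAt_id (θ : ℂ)).const_mul (-(Complex.I * k))).cexp
  have := h.comp_ofReal
  simpa [neg_mul, mul_comm] using this

lemma fourierMode_z (a b β : ℝ) (N : ℕ) (k : ℤ) (z : ℝ) :
    fourierMode (fun p => (p.1 : ℂ)) k z = if k = 0 then (z : ℂ) else 0 := by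
  unfold fourierMode
  split_ifs with h
  · subst h
    simp only [Int.cast_zero, mul_zero, zero_mul, neg_zero, Complex.exp_zero, mul_one]
    rw [intervalIntegral.integral_const]
    have : (Real.pi : ℂ) ≠ 0 := by exact_mod_cast Real.pi_ne_zero
    field_simp
    simp only [sub_zero, Complex.real_smul]; push_cast; ring
  · have hc : -(Complex.I * (k:ℂ)) ≠ 0 := by
      simp only [ne_eq, neg_eq_zero, mul_eq_zero, Complex.I_ne_zero, false_or]
      exact_mod_cast h
    show 1 / (2 * (Real.pi:ℂ)) * ∫ θ in (0:ℝ)..(2*Real.pi),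
      (z:ℂ) * Complex.exp (-(Complex.I * k * θ)) = 0
    rw [intervalIntegral.integral_const_mul]
    have heq : ∀ θ : ℝ, Complex.exp (-(Complex.I * k * θ)) =
        Complex.exp (-(Complex.I * k) * θ) := by intro θ; ring_nf
    simp_rw [heq]
    rw [integral_exp_mul_complex hc]
    have h2 : Complex.exp (-(Complex.I * k) * ((2 * Real.pi : ℝ) : ℂ)) = 1 := by
      rw [show -(Complex.I * (k:ℂ)) * ((2 * Real.pi : ℝ) : ℂ)
          = -(Complex.I * k * ((2 * Real.pi : ℝ) : ℂ)) by ring]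
      exact exp_neg_I_int_two_pi k
    have h3 : Complex.exp (-(Complex.I * (k:ℂ) * (2 * (Real.pi:ℂ)))) = 1 := by
      have h4 := exp_neg_I_int_two_pi k
      push_cast at h4
      exact h4
    simp [h2, h3]

lemma fourierMode_ptheta (f : ℝ × ℝ → ℂ) (hcont : Continuous f) (hper : Periodic2 f)
    (hC1 : ∀ z : ℝ, ContDiff ℝ 1 (fun θ => f (z, θ))) (k : ℤ) (z : ℝ) :
    fourierMode (pθ f) k z = Complex.I * k * fourierMode f k z := by
  unfold fourierMode
  have hderiv : ∀ θ : ℝ, HasDerivAt (fun t => f (z, t)) (pθ f (z, θ)) θ := by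
    intro θ
    exact (((hC1 z).differentiable one_ne_zero) θ).hasDerivAt
  have hcont' : Continuous fun θ : ℝ => pθ f (z, θ) := by
    have := (hC1 z).continuous_deriv le_rfl
    exact this
  have hparts := intervalIntegral.integral_mul_deriv_eq_deriv_mul
    (u := fun θ : ℝ => f (z, θ))
    (v := fun θ : ℝ => Complex.exp (-(Complex.I * k * θ)))
    (u' := fun θ : ℝ => pθ f (z, θ))
    (v' := fun θ : ℝ => -(Complex.I * k) * Complex.exp (-(Complex.I * k * θ)))
    (a := (0:ℝ)) (b := 2 * Real.pi)
    (fun x _ => hderiv x)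
    (fun x _ => hasDerivAt_expk k x)
    (hcont'.intervalIntegrable _ _)
    ((by continuity : Continuous fun θ : ℝ =>
      -(Complex.I * k) * Complex.exp (-(Complex.I * k * θ))).intervalIntegrable _ _)
  have hbndry : f (z, 2 * Real.pi) = f (z, 0) := by
    have := hper z 0
    simpa using this
  rw [hbndry, exp_neg_I_int_two_pi] at hparts
  simp only [Complex.ofReal_zero, mul_zero, neg_zero, Complex.exp_zero, mul_one] at hparts
  have key : ∫ θ in (0:ℝ)..(2*Real.pi), pθ f (z, θ) * Complex.exp (-(Complex.I * k * θ))
      = Complex.I * k * ∫ θ in (0:ℝ)..(2*Real.pi), f (z, θ) * Complex.exp (-(Complex.I * k * θ)) := by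
    have h1 : ∫ θ in (0:ℝ)..(2*Real.pi),
        f (z, θ) * (-(Complex.I * k) * Complex.exp (-(Complex.I * k * θ)))
        = -(Complex.I * k) * ∫ θ in (0:ℝ)..(2*Real.pi),
          f (z, θ) * Complex.exp (-(Complex.I * k * θ)) := by
      rw [← intervalIntegral.integral_const_mul]
      congr 1; ext θ; ring
    rw [h1] at hparts
    linear_combination hparts
  rw [key]; ring

theorem commutator_with_z_exact (a b β : ℝ) (hab : a < b) (hβ : 0 < β)
    (f : ℝ × ℝ → ℂ) (hcont : Continuous f) (hper : Periodic2 f)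
    (hC1 : ∀ z : ℝ, ContDiff ℝ 1 (fun θ => f (z, θ)))
    (N : ℕ) (hN : 0 < N) :
    (TN a b β N (fun p => (p.1 : ℂ)) * TN a b β N f
        - TN a b β N f * TN a b β N (fun p => (p.1 : ℂ))
      = (-(Complex.I * (hbar a b β N : ℝ))) • TN a b β N (pθ f)) ∧
    (TN a b β N (fun p => (p.1 : ℂ)) * TN a b β N f
        - TN a b β N f * TN a b β N (fun p => (p.1 : ℂ))
      = (Complex.I * (hbar a b β N : ℝ)) • TN a b β N (pb (fun p => (p.1 : ℂ)) f)) := by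
  have hdiag : TN a b β N (fun p => (p.1:ℂ)) =
      Matrix.diagonal (fun n : Fin N => ((zN a b β N (n.1+1) (n.1+1) : ℝ) : ℂ)) := by
    ext n m
    simp only [TN, Matrix.of_apply, Matrix.diagonal_apply, fourierMode_z a b β N]
    rcases eq_or_ne n m with rfl | h
    · simp
    · have hnm : ((n.1 : ℤ) - m.1) ≠ 0 := by
        rw [sub_ne_zero]
        exact_mod_cast fun hh => h (Fin.ext hh)
      simp [hnm, h]
  have hfirst : TN a b β N (fun p => (p.1 : ℂ)) * TN a b β N f
      - TN a b β N f * TN a b β N (fun p => (p.1 : ℂ))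
      = (-(Complex.I * (hbar a b β N : ℝ))) • TN a b β N (pθ f) := by
    rw [hdiag]
    ext n m
    simp only [Matrix.sub_apply, Matrix.diagonal_mul, Matrix.mul_diagonal,
      Matrix.smul_apply, smul_eq_mul, TN, Matrix.of_apply]
    rw [fourierMode_ptheta f hcont hper hC1]
    have hz : ((zN a b β N (n.1+1) (n.1+1) : ℝ) : ℂ) - ((zN a b β N (m.1+1) (m.1+1) : ℝ) : ℂ)
        = (hbar a b β N : ℂ) * (((n.1 : ℤ) : ℂ) - ((m.1 : ℤ) : ℂ)) := by
      simp only [zN]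
      push_cast
      ring
    have hI : Complex.I * Complex.I = -1 := Complex.I_mul_I
    set F := fourierMode f ((n.1 : ℤ) - (m.1 : ℤ)) (zN a b β N (n.1 + 1) (m.1 + 1))
    have : ((zN a b β N (n.1+1) (n.1+1) : ℝ) : ℂ) * F
        - F * ((zN a b β N (m.1+1) (m.1+1) : ℝ) : ℂ)
        = (((zN a b β N (n.1+1) (n.1+1) : ℝ) : ℂ) - ((zN a b β N (m.1+1) (m.1+1) : ℝ) : ℂ)) * F := by
      ring
    rw [this, hz]
    push_cast
    linear_combination (((n.1:ℂ) - (m.1:ℂ)) * (hbar a b β N : ℂ) * F) * hI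
  refine ⟨hfirst, ?_⟩
  have hpb : pb (fun p => (p.1 : ℂ)) f = fun p => -(pθ f p) := by
    funext p
    simp only [pb, pθ, pz]
    have h1 : deriv (fun t : ℝ => ((p.1 : ℝ) : ℂ)) p.2 = 0 := deriv_const _ _
    have h2 : deriv (fun t : ℝ => (t : ℂ)) p.1 = 1 := by
      have : HasDerivAt (fun t : ℝ => (t : ℂ)) 1 p.1 := by
        simpa using (hasDerivAt_id p.1).ofReal_comp
      exact this.deriv
    rw [h1, h2]
    ring
  have hTNneg : TN a b β N (fun p => -(pθ f p)) = -TN a b β N (pθ f) := by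
    ext n m
    simp only [TN, Matrix.of_apply, Matrix.neg_apply, fourierMode]
    simp_rw [neg_mul]
    rw [intervalIntegral.integral_neg]
    ring
  rw [hpb, hTNneg, hfirst]
  simp [smul_neg]
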